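/- Bivariate model pmf: let λ_1, λ_2 > 0 and ω ∈ [0,1], and on (0,1)^2 with the product measure μ^2 define X_1(u,v) = q_{λ_1}(u) and X_2(u,v) = q_{ωλ_2}(u) + q_{(1−ω)λ_2}(v). Then for all x_1, x_2 ∈ ℕ, μ^2{(u,v) : X_1 = x_1, X_2 = x_2} = Σ_{z=0}^{x_2} c(x_1, x_2 − z) · g_{(1−ω)λ_2}(z), where c(y_1,y_2) = max(0, min{G_{λ_1}(y_1), G_{ωλ_2}(y_2)} − max{G_{λ_1}(y_1 − 1), G_{ωλ_2}(y_2 − 1)}) with the convention G(−1) = 0, and g_θ(z) = e^{−θ} θ^z / z!. -/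

import Mathlib

open MeasureTheory

/-- The uniform probability measure on the open interval (0,1):
Lebesgue measure restricted to (0,1). -/
noncomputable def unif : Measure ℝ := volume.restrict (Set.Ioo (0 : ℝ) 1)

/-- The quantile transform of a cdf `F` on ℕ: `q_F(u) = min {n : u ≤ F n}`. -/
noncomputable def qt (F : ℕ → ℝ) (u : ℝ) : ℕ := sInf {n : ℕ | u ≤ F n}

/-- The Poisson(λ) cumulative distribution function on ℕ. -/
noncomputable def poisCdf (l : ℝ) (n : ℕ) : ℝ :=
  ∑ k ∈ Finset.range (n + 1), Real.exp (-l) * l ^ k / (Nat.factorial k)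

/-- The Poisson(λ) probability mass function on ℕ. -/
noncomputable def poisPmf (l : ℝ) (n : ℕ) : ℝ :=
  Real.exp (-l) * l ^ n / (Nat.factorial n)

/-- `F(n-1)` with the convention `F(-1) = 0`. -/
noncomputable def cdfm1 (F : ℕ → ℝ) (n : ℕ) : ℝ := if n = 0 then 0 else F (n - 1)

lemma poisPmf_nonneg {l : ℝ} (hl : 0 ≤ l) (n : ℕ) : 0 ≤ poisPmf l n := by
  unfold poisPmf; positivity

lemma poisCdf_eq_sum (l : ℝ) (n : ℕ) :
    poisCdf l n = ∑ k ∈ Finset.range (n + 1), poisPmf l k := rfl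

lemma poisCdf_mono {l : ℝ} (hl : 0 ≤ l) : Monotone (poisCdf l) := by
  apply monotone_nat_of_le_succ
  intro n
  rw [poisCdf_eq_sum, poisCdf_eq_sum, Finset.sum_range_succ (n := n + 1)]
  have := poisPmf_nonneg hl (n + 1)
  linarith

lemma poisCdf_nonneg {l : ℝ} (hl : 0 ≤ l) (n : ℕ) : 0 ≤ poisCdf l n := by
  rw [poisCdf_eq_sum]
  exact Finset.sum_nonneg fun i _ => poisPmf_nonneg hl i

lemma hasSum_poisPmf {l : ℝ} : HasSum (poisPmf l) 1 := by
  have h := NormedSpace.expSeries_div_hasSum_exp (𝔸 := ℝ) l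
  rw [← Real.exp_eq_exp_ℝ] at h
  have h2 := h.mul_left (Real.exp (-l))
  have h3 : Real.exp (-l) * Real.exp l = 1 := by
    rw [← Real.exp_add]; simp
  rw [h3] at h2
  have : (fun n => Real.exp (-l) * (l ^ n / (n.factorial : ℝ))) = poisPmf l := by
    funext n; unfold poisPmf; ring
  rwa [this] at h2

lemma poisCdf_le_one {l : ℝ} (hl : 0 ≤ l) (n : ℕ) : poisCdf l n ≤ 1 := by
  rw [poisCdf_eq_sum]
  exact sum_le_hasSum _ (fun i _ => poisPmf_nonneg hl i) hasSum_poisPmf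

lemma exists_le_poisCdf {l : ℝ} {u : ℝ} (hu : u < 1) : ∃ n, u ≤ poisCdf l n := by
  have h : Filter.Tendsto (fun n => poisCdf l n) Filter.atTop (nhds 1) := by
    have h1 := (hasSum_poisPmf (l := l)).tendsto_sum_nat
    have h2 := h1.comp (Filter.tendsto_add_atTop_nat 1)
    simpa [Function.comp_def, poisCdf_eq_sum] using h2
  exact (h.eventually (eventually_ge_nhds hu)).exists

lemma cdfm1_nonneg {l : ℝ} (hl : 0 ≤ l) (n : ℕ) : 0 ≤ cdfm1 (poisCdf l) n := by
  unfold cdfm1; split_ifs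
  · exact le_refl 0
  · exact poisCdf_nonneg hl _

lemma poisCdf_sub_cdfm1 (l : ℝ) (n : ℕ) :
    poisCdf l n - cdfm1 (poisCdf l) n = poisPmf l n := by
  unfold cdfm1
  split_ifs with h
  · subst h
    rw [poisCdf_eq_sum]
    simp
  · obtain ⟨m, rfl⟩ : ∃ m, n = m + 1 := ⟨n - 1, by omega⟩
    simp only [Nat.add_sub_cancel]
    rw [poisCdf_eq_sum, poisCdf_eq_sum, Finset.sum_range_succ]
    ring

lemma qt_eq_iff {F : ℕ → ℝ} (hF : Monotone F) {u : ℝ} (hu0 : 0 < u)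
    (hne : ∃ n, u ≤ F n) (n : ℕ) :
    qt F u = n ↔ cdfm1 F n < u ∧ u ≤ F n := by
  have hSne : {m : ℕ | u ≤ F m}.Nonempty := hne
  constructor
  · rintro rfl
    have hmem : qt F u ∈ {m : ℕ | u ≤ F m} := Nat.sInf_mem hSne
    refine ⟨?_, hmem⟩
    unfold cdfm1
    split_ifs with h
    · exact hu0
    · by_contra hc
      push_neg at hc
      have hmem2 : qt F u - 1 ∈ {m : ℕ | u ≤ F m} := hc
      have := Nat.sInf_le hmem2
      unfold qt at *
      omega
  · rintro ⟨h1, h2⟩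
    apply le_antisymm
    · exact Nat.sInf_le h2
    · apply le_csInf hSne
      intro m hm
      by_contra hc
      push_neg at hc
      have hle : F m ≤ cdfm1 F n := by
        unfold cdfm1
        split_ifs with h
        · omega
        · exact hF (by omega)
      have : u ≤ F m := hm
      linarith

lemma volume_Ioo_inter_Ioc {a b : ℝ} (ha : 0 ≤ a) (hb : b ≤ 1) :
    volume (Set.Ioo 0 1 ∩ Set.Ioc a b) = ENNReal.ofReal (b - a) := by
  rcases eq_or_lt_of_le hb with rfl | hb'
  · have hset : Set.Ioo (0 : ℝ) 1 ∩ Set.Ioc a 1 = Set.Ioo a 1 := by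
      ext x
      simp only [Set.mem_inter_iff, Set.mem_Ioo, Set.mem_Ioc]
      constructor
      · rintro ⟨⟨_, h1⟩, ⟨h2, _⟩⟩; exact ⟨h2, h1⟩
      · rintro ⟨h1, h2⟩; exact ⟨⟨lt_of_le_of_lt ha h1, h2⟩, h1, le_of_lt h2⟩
    rw [hset, Real.volume_Ioo]
  · have hset : Set.Ioo (0 : ℝ) 1 ∩ Set.Ioc a b = Set.Ioc a b := by
      ext x
      simp only [Set.mem_inter_iff, Set.mem_Ioo, Set.mem_Ioc]
      constructor
      · rintro ⟨_, h⟩; exact h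
      · rintro ⟨h1, h2⟩; exact ⟨⟨lt_of_le_of_lt ha h1, lt_of_le_of_lt h2 hb'⟩, h1, h2⟩
    rw [hset, Real.volume_Ioc]

lemma ofReal_max_zero (c : ℝ) : ENNReal.ofReal (max 0 c) = ENNReal.ofReal c := by
  rcases le_total c 0 with h | h
  · rw [max_eq_left h, ENNReal.ofReal_of_nonpos h]; simp
  · rw [max_eq_right h]

/-- Bivariate MP model pmf: with `X₁(u,v) = q_{λ₁}(u)` and
`X₂(u,v) = q_{ωλ₂}(u) + q_{(1−ω)λ₂}(v)` on (0,1)² with the product uniform measure,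
`P(X₁ = x₁, X₂ = x₂) = Σ_{z=0}^{x₂} c(x₁, x₂ − z) g_{(1−ω)λ₂}(z)`. -/
theorem mp2_pmf (l1 l2 : ℝ) (hl1 : 0 < l1) (hl2 : 0 < l2)
    (w : ℝ) (hw0 : 0 ≤ w) (hw1 : w ≤ 1) (x1 x2 : ℕ) :
    (unif.prod unif) {p : ℝ × ℝ |
        qt (poisCdf l1) p.1 = x1 ∧
        qt (poisCdf (w * l2)) p.1 + qt (poisCdf ((1 - w) * l2)) p.2 = x2}
      = ENNReal.ofReal (∑ z ∈ Finset.range (x2 + 1),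
          max 0 (min (poisCdf l1 x1) (poisCdf (w * l2) (x2 - z))
              - max (cdfm1 (poisCdf l1) x1) (cdfm1 (poisCdf (w * l2)) (x2 - z)))
            * poisPmf ((1 - w) * l2) z) := by
  have hm2 : (0 : ℝ) ≤ w * l2 := mul_nonneg hw0 hl2.le
  have hm3 : (0 : ℝ) ≤ (1 - w) * l2 := mul_nonneg (by linarith) hl2.le
  set F1 := poisCdf l1 with hF1
  set F2 := poisCdf (w * l2) with hF2
  set F3 := poisCdf ((1 - w) * l2) with hF3
  have hM1 : Monotone F1 := poisCdf_mono hl1.le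
  have hM2 : Monotone F2 := poisCdf_mono hm2
  have hM3 : Monotone F3 := poisCdf_mono hm3
  set A : ℕ → Set ℝ := fun z =>
    Set.Ioo 0 1 ∩ Set.Ioc (max (cdfm1 F1 x1) (cdfm1 F2 (x2 - z)))
      (min (F1 x1) (F2 (x2 - z))) with hA
  set B : ℕ → Set ℝ := fun z => Set.Ioo 0 1 ∩ Set.Ioc (cdfm1 F3 z) (F3 z) with hB
  -- rewrite the product measure as a restriction
  have hprod : unif.prod unif
      = (volume.prod volume).restrict (Set.Ioo (0:ℝ) 1 ×ˢ Set.Ioo (0:ℝ) 1) := by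
    rw [unif, Measure.prod_restrict]
  rw [hprod, Measure.restrict_apply' (measurableSet_Ioo.prod measurableSet_Ioo)]
  -- decompose the set
  have hdecomp : {p : ℝ × ℝ | qt F1 p.1 = x1 ∧ qt F2 p.1 + qt F3 p.2 = x2}
        ∩ (Set.Ioo (0:ℝ) 1 ×ˢ Set.Ioo (0:ℝ) 1)
      = ⋃ z ∈ Finset.range (x2 + 1), A z ×ˢ B z := by
    ext ⟨u, v⟩
    simp only [Set.mem_inter_iff, Set.mem_setOf_eq, Set.mem_prod, Set.mem_iUnion,
      Finset.mem_range, hA, hB, Set.mem_Ioo, Set.mem_Ioc]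
    constructor
    · rintro ⟨⟨hq1, hq23⟩, hu, hv⟩
      refine ⟨qt F3 v, by omega, ⟨hu, ?_⟩, hv, ?_⟩
      · have h1 := (qt_eq_iff hM1 hu.1 (exists_le_poisCdf hu.2) x1).1 hq1
        have h2 := (qt_eq_iff hM2 hu.1 (exists_le_poisCdf hu.2) (x2 - qt F3 v)).1 (by omega)
        exact ⟨max_lt h1.1 h2.1, le_min h1.2 h2.2⟩
      · exact (qt_eq_iff hM3 hv.1 (exists_le_poisCdf hv.2) (qt F3 v)).1 rfl
    · rintro ⟨z, hz, ⟨hu, hau, hbu⟩, hv, hav, hbv⟩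
      have hq1 : qt F1 u = x1 :=
        (qt_eq_iff hM1 hu.1 (exists_le_poisCdf hu.2) x1).2
          ⟨lt_of_le_of_lt (le_max_left _ _) hau, le_trans hbu (min_le_left _ _)⟩
      have hq2 : qt F2 u = x2 - z :=
        (qt_eq_iff hM2 hu.1 (exists_le_poisCdf hu.2) (x2 - z)).2
          ⟨lt_of_le_of_lt (le_max_right _ _) hau, le_trans hbu (min_le_right _ _)⟩
      have hq3 : qt F3 v = z :=
        (qt_eq_iff hM3 hv.1 (exists_le_poisCdf hv.2) z).2 ⟨hav, hbv⟩
      exact ⟨⟨hq1, by omega⟩, hu, hv⟩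
  rw [hdecomp]
  -- pairwise disjointness
  have hdisj : (↑(Finset.range (x2 + 1)) : Set ℕ).PairwiseDisjoint
      (fun z => A z ×ˢ B z) := by
    intro z _ z' _ hzz'
    apply Set.disjoint_left.2
    rintro ⟨u, v⟩ h1 h2
    simp only [Set.mem_prod, hA, hB, Set.mem_inter_iff, Set.mem_Ioo, Set.mem_Ioc] at h1 h2
    have hq3 : qt F3 v = z :=
      (qt_eq_iff hM3 h1.2.1.1 (exists_le_poisCdf h1.2.1.2) z).2 ⟨h1.2.2.1, h1.2.2.2⟩
    have hq3' : qt F3 v = z' :=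
      (qt_eq_iff hM3 h2.2.1.1 (exists_le_poisCdf h2.2.1.2) z').2 ⟨h2.2.2.1, h2.2.2.2⟩
    exact hzz' (hq3 ▸ hq3')
  rw [measure_biUnion_finset hdisj (fun z _ =>
    ((measurableSet_Ioo.inter measurableSet_Ioc).prod
      (measurableSet_Ioo.inter measurableSet_Ioc)))]
  -- compute each rectangle's measure
  have hterm : ∀ z ∈ Finset.range (x2 + 1),
      (volume.prod volume) (A z ×ˢ B z)
        = ENNReal.ofReal (max 0 (min (F1 x1) (F2 (x2 - z))
              - max (cdfm1 F1 x1) (cdfm1 F2 (x2 - z))) * poisPmf ((1 - w) * l2) z) := by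
    intro z _
    rw [Measure.prod_prod]
    have hcn1 : 0 ≤ cdfm1 F1 x1 := cdfm1_nonneg hl1.le x1
    have hcn2 : 0 ≤ cdfm1 F2 (x2 - z) := cdfm1_nonneg hm2 _
    have hcn3 : 0 ≤ cdfm1 F3 z := cdfm1_nonneg hm3 z
    have hb1 : F1 x1 ≤ 1 := poisCdf_le_one hl1.le x1
    have hb2 : F2 (x2 - z) ≤ 1 := poisCdf_le_one hm2 _
    have hb3 : F3 z ≤ 1 := poisCdf_le_one hm3 z
    show volume (Set.Ioo 0 1 ∩ Set.Ioc (max (cdfm1 F1 x1) (cdfm1 F2 (x2 - z)))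
          (min (F1 x1) (F2 (x2 - z)))) *
        volume (Set.Ioo 0 1 ∩ Set.Ioc (cdfm1 F3 z) (F3 z)) = _
    rw [volume_Ioo_inter_Ioc (le_trans hcn1 (le_max_left _ _))
        (le_trans (min_le_left _ _) hb1),
      volume_Ioo_inter_Ioc hcn3 hb3]
    rw [show F3 z - cdfm1 F3 z = poisPmf ((1 - w) * l2) z from
        poisCdf_sub_cdfm1 ((1 - w) * l2) z]
    rw [← ofReal_max_zero (min (F1 x1) (F2 (x2 - z))
        - max (cdfm1 F1 x1) (cdfm1 F2 (x2 - z))),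
      ← ENNReal.ofReal_mul (le_max_left 0 _)]
  rw [Finset.sum_congr rfl hterm]
  rw [ENNReal.ofReal_sum_of_nonneg (fun z _ =>
    mul_nonneg (le_max_left 0 _) (poisPmf_nonneg hm3 z))]
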